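/- Let X be a real Banach space and let F : [0,1] → 2^X \ {∅} be a bounded multifunction. Then the following conditions are equivalent: (i) I(F) ⊆ I(conv F); (ii) every element of I(F) is a convex set. -/

import Mathlib

open Pointwise Filter Metric Set

/-- A tagged partition of `[0,1]` into finitely many segments with tags. -/
structure TaggedPartition where
  n : ℕ
  pt : Fin (n + 1) → ℝ
  tag : Fin n → ℝ
  pt_zero : pt 0 = 0
  pt_last : pt (Fin.last n) = 1
  pt_mono : Monotone pt
  tag_mem : ∀ i : Fin n, tag i ∈ Set.Icc (pt i.castSucc) (pt i.succ)

/-- The diameter (mesh) of a tagged partition. -/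
noncomputable def TaggedPartition.mesh (P : TaggedPartition) : ℝ :=
  ⨆ i : Fin P.n, (P.pt i.succ - P.pt i.castSucc)

/-- Riemann integral sum of a multifunction, using Minkowski sums and
pointwise scalar multiples of sets. -/
noncomputable def msum {X : Type*} [NormedAddCommGroup X] [NormedSpace ℝ X]
    (F : ℝ → Set X) (P : TaggedPartition) : Set X :=
  ∑ i : Fin P.n, (P.pt i.succ - P.pt i.castSucc) • F (P.tag i)

/-- The set `I(F)` of limits of Riemann integral sums of a multifunction `F`:
all closed nonempty subsets that are Hausdorff-distance limits of sequences of Riemann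
sums along sequences of tagged partitions whose diameters tend to `0`. -/
def limitSets {X : Type*} [NormedAddCommGroup X] [NormedSpace ℝ X]
    (F : ℝ → Set X) : Set (Set X) :=
  {A | A.Nonempty ∧ IsClosed A ∧ ∃ P : ℕ → TaggedPartition,
    Tendsto (fun k => (P k).mesh) atTop (nhds 0) ∧
    Tendsto (fun k => EMetric.hausdorffEdist (msum F (P k)) A) atTop (nhds 0)}

/-- The Riemann sum of `conv F` is the convex hull of the Riemann sum of `F`. -/
lemma msum_convexHull {X : Type*} [NormedAddCommGroup X] [NormedSpace ℝ X]
    (F : ℝ → Set X) (P : TaggedPartition) :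
    msum (fun t => convexHull ℝ (F t)) P = convexHull ℝ (msum F P) := by
  unfold msum
  simp only [convexHull_sum, convexHull_smul]

/-- If `x` lies in the convex hull of `s`, its distance to the convex hull of `t`
is at most the Hausdorff distance between `s` and `t`. -/
lemma infEdist_convexHull_le_of_mem {X : Type*} [NormedAddCommGroup X] [NormedSpace ℝ X]
    {s t : Set X} {x : X} (hx : x ∈ convexHull ℝ s) :
    EMetric.infEdist x (convexHull ℝ t) ≤ EMetric.hausdorffEdist s t := by
  set r := EMetric.hausdorffEdist s t with hr
  rcases eq_or_ne r ⊤ with h | h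
  · simp [h]
  · have hsub : s ⊆ Metric.cthickening r.toReal (convexHull ℝ t) := by
      intro y hy
      rw [Metric.mem_cthickening_iff, ENNReal.ofReal_toReal h]
      exact le_trans (EMetric.infEdist_anti (subset_convexHull ℝ t))
        (EMetric.infEdist_le_hausdorffEdist_of_mem hy)
    have hconv : Convex ℝ (Metric.cthickening r.toReal (convexHull ℝ t)) :=
      (convex_convexHull ℝ t).cthickening _
    have := convexHull_min hsub hconv hx
    rw [Metric.mem_cthickening_iff, ENNReal.ofReal_toReal h] at this
    exact this

/-- Taking convex hulls does not increase the Hausdorff distance. -/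
lemma hausdorffEdist_convexHull_le {X : Type*} [NormedAddCommGroup X] [NormedSpace ℝ X]
    (s t : Set X) :
    EMetric.hausdorffEdist (convexHull ℝ s) (convexHull ℝ t) ≤
      EMetric.hausdorffEdist s t := by
  refine EMetric.hausdorffEdist_le_of_infEdist (fun x hx => ?_) (fun x hx => ?_)
  · exact infEdist_convexHull_le_of_mem hx
  · rw [show EMetric.hausdorffEdist s t = EMetric.hausdorffEdist t s from
        EMetric.hausdorffEdist_comm]
    exact infEdist_convexHull_le_of_mem hx

/-- A closed Hausdorff limit of convex sets is convex. -/
lemma convex_of_tendsto_hausdorffEdist {X : Type*} [NormedAddCommGroup X] [NormedSpace ℝ X]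
    {A : Set X} (hA : IsClosed A) {C : ℕ → Set X} (hC : ∀ k, Convex ℝ (C k))
    (h : Tendsto (fun k => EMetric.hausdorffEdist (C k) A) atTop (nhds 0)) :
    Convex ℝ A := by
  intro x hx y hy a b ha hb hab
  have hmem : a • x + b • y ∈ closure A := by
    rw [Metric.mem_closure_iff]
    intro ε hε
    have h3 : (0:ℝ) < ε/3 := by linarith
    have hpos : (0:ENNReal) < ENNReal.ofReal (ε/3) := by simp [h3]
    obtain ⟨k, hk⟩ := (h.eventually (gt_mem_nhds hpos)).exists
    have hxk : EMetric.infEdist x (C k) < ENNReal.ofReal (ε/3) := by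
      refine lt_of_le_of_lt ?_ hk
      rw [show EMetric.hausdorffEdist (C k) A = EMetric.hausdorffEdist A (C k) from
        EMetric.hausdorffEdist_comm]
      exact EMetric.infEdist_le_hausdorffEdist_of_mem hx
    have hyk : EMetric.infEdist y (C k) < ENNReal.ofReal (ε/3) := by
      refine lt_of_le_of_lt ?_ hk
      rw [show EMetric.hausdorffEdist (C k) A = EMetric.hausdorffEdist A (C k) from
        EMetric.hausdorffEdist_comm]
      exact EMetric.infEdist_le_hausdorffEdist_of_mem hy
    obtain ⟨x', hx', hdx⟩ := EMetric.infEdist_lt_iff.mp hxk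
    obtain ⟨y', hy', hdy⟩ := EMetric.infEdist_lt_iff.mp hyk
    rw [edist_lt_ofReal] at hdx hdy
    have hz : a • x' + b • y' ∈ C k := hC k hx' hy' ha hb hab
    have hzA : EMetric.infEdist (a • x' + b • y') A < ENNReal.ofReal (ε/3) :=
      lt_of_le_of_lt (EMetric.infEdist_le_hausdorffEdist_of_mem hz) hk
    obtain ⟨w, hw, hdw⟩ := EMetric.infEdist_lt_iff.mp hzA
    rw [edist_lt_ofReal] at hdw
    refine ⟨w, hw, ?_⟩
    have hd1 : dist (a • x + b • y) (a • x' + b • y') ≤ a * dist x x' + b * dist y y' := by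
      rw [dist_eq_norm]
      have : a • x + b • y - (a • x' + b • y') = a • (x - x') + b • (y - y') := by
        module
      rw [this]
      calc ‖a • (x - x') + b • (y - y')‖ ≤ ‖a • (x - x')‖ + ‖b • (y - y')‖ :=
            norm_add_le _ _
        _ = a * dist x x' + b * dist y y' := by
            rw [norm_smul, norm_smul, Real.norm_of_nonneg ha, Real.norm_of_nonneg hb,
              dist_eq_norm, dist_eq_norm]
    have hd2 : a * dist x x' + b * dist y y' ≤ ε/3 + ε/3 := by
      have h1 : a * dist x x' ≤ a * (ε/3) := mul_le_mul_of_nonneg_left hdx.le ha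
      have h2 : b * dist y y' ≤ b * (ε/3) := mul_le_mul_of_nonneg_left hdy.le hb
      nlinarith
    calc dist (a • x + b • y) w
        ≤ dist (a • x + b • y) (a • x' + b • y') + dist (a • x' + b • y') w :=
          dist_triangle _ _ _
      _ < (ε/3 + ε/3) + ε/3 := by
          have := le_trans hd1 hd2
          linarith
      _ = ε := by ring
  rwa [hA.closure_eq] at hmem

/-- For a bounded multifunction `F` on `[0,1]` with values in a Banach space,
`I(F) ⊆ I(conv F)` holds if and only if every element of `I(F)` is convex. -/
theorem limitSets_subset_convexHull_iff_forall_convex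
    {X : Type*} [NormedAddCommGroup X] [NormedSpace ℝ X] [CompleteSpace X]
    (F : ℝ → Set X)
    (hFne : ∀ t ∈ Set.Icc (0 : ℝ) 1, (F t).Nonempty)
    (hFbdd : ∃ M : ℝ, ∀ t ∈ Set.Icc (0 : ℝ) 1, ∀ a ∈ F t, ‖a‖ ≤ M) :
    limitSets F ⊆ limitSets (fun t => convexHull ℝ (F t)) ↔
      ∀ A ∈ limitSets F, Convex ℝ A := by
  constructor
  · intro hsub A hA
    obtain ⟨hne, hcl, P, hmesh, hlim⟩ := hsub hA
    exact convex_of_tendsto_hausdorffEdist hcl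
      (C := fun k => msum (fun t => convexHull ℝ (F t)) (P k))
      (fun k => by show Convex ℝ (msum (fun t => convexHull ℝ (F t)) (P k)); rw [msum_convexHull]; exact convex_convexHull ℝ _) hlim
  · intro hconv A hA
    have hc := hconv A hA
    obtain ⟨hne, hcl, P, hmesh, hlim⟩ := hA
    refine ⟨hne, hcl, P, hmesh, ?_⟩
    have key : ∀ k, EMetric.hausdorffEdist (msum (fun t => convexHull ℝ (F t)) (P k)) A ≤
        EMetric.hausdorffEdist (msum F (P k)) A := by
      intro k
      have h := hausdorffEdist_convexHull_le (msum F (P k)) A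
      rw [hc.convexHull_eq, ← msum_convexHull] at h
      exact h
    exact tendsto_of_tendsto_of_tendsto_of_le_of_le tendsto_const_nhds hlim
      (fun k => zero_le) key
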